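/- For every natural number d, C(d,10) = (1814400/1814400)·L_d(2) − (1109472/1209600)·L_d(3) + (724550/907200)·L_d(4) − (269324/725760)·L_d(5) + (63273/604800)·L_d(6) − (9450/518400)·L_d(7) + (870/453600)·L_d(8) − (45/403200)·L_d(9) + (1/362880)·L_d(10) as rational numbers (the denominators being 10·9·8·7·6·5·4·3 = 1814400, 10·9·8·7·6·5·4·2! = 1209600, 10·9·8·7·6·5·3! = 907200, 10·9·8·7·6·4! = 725760, 10·9·8·7·5! = 604800, 10·9·8·6! = 518400, 10·9·7! = 453600, 10·8! = 403200, 9! = 362880), where L_d(w) = (1/w)·Σ_{r ∣ w} μ(r)·d^{w/r} is the Witt number. -/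
import Mathlib


/-- The Witt number `L_d(w) = (1/w) * Σ_{r ∣ w} μ(r) * d^(w/r)`, as a rational number. -/
def witt (d w : ℕ) : ℚ :=
  (1 / w : ℚ) * ∑ r ∈ w.divisors, (ArithmeticFunction.moebius r : ℚ) * (d : ℚ) ^ (w / r)

open ArithmeticFunction in
lemma mu1 : (moebius 1 : ℤ) = 1 := by simp

open ArithmeticFunction in
lemma mu2 : (moebius 2 : ℤ) = -1 := moebius_apply_prime (by norm_num)

open ArithmeticFunction in
lemma mu3 : (moebius 3 : ℤ) = -1 := moebius_apply_prime (by norm_num)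

open ArithmeticFunction in
lemma mu5 : (moebius 5 : ℤ) = -1 := moebius_apply_prime (by norm_num)

open ArithmeticFunction in
lemma mu7 : (moebius 7 : ℤ) = -1 := moebius_apply_prime (by norm_num)

open ArithmeticFunction in
lemma mu4 : (moebius 4 : ℤ) = 0 := by
  rw [show (4:ℕ) = 2^2 from rfl, moebius_apply_prime_pow (by norm_num) (by norm_num)]; norm_num

open ArithmeticFunction in
lemma mu8 : (moebius 8 : ℤ) = 0 := by
  rw [show (8:ℕ) = 2^3 from rfl, moebius_apply_prime_pow (by norm_num) (by norm_num)]; norm_num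

open ArithmeticFunction in
lemma mu9 : (moebius 9 : ℤ) = 0 := by
  rw [show (9:ℕ) = 3^2 from rfl, moebius_apply_prime_pow (by norm_num) (by norm_num)]; norm_num

open ArithmeticFunction in
lemma mu6 : (moebius 6 : ℤ) = 1 := by
  rw [show (6:ℕ) = 2*3 from rfl, isMultiplicative_moebius.map_mul_of_coprime (by norm_num),
    mu2, mu3]; norm_num

open ArithmeticFunction in
lemma mu10 : (moebius 10 : ℤ) = 1 := by
  rw [show (10:ℕ) = 2*5 from rfl, isMultiplicative_moebius.map_mul_of_coprime (by norm_num),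
    mu2, mu5]; norm_num

lemma poch10 (x : ℚ) : (ascPochhammer ℚ 10).eval x =
    x*(x+1)*(x+2)*(x+3)*(x+4)*(x+5)*(x+6)*(x+7)*(x+8)*(x+9) := by
  rw [show (10:ℕ) = 1+1+1+1+1+1+1+1+1+1 from rfl]
  simp [ascPochhammer_succ_eval, ascPochhammer_one]

lemma key (d : ℕ) : (d.choose 10 : ℚ) * 3628800 =
    ((d:ℚ)-9)*((d:ℚ)-8)*((d:ℚ)-7)*((d:ℚ)-6)*((d:ℚ)-5)*((d:ℚ)-4)*((d:ℚ)-3)*((d:ℚ)-2)*((d:ℚ)-1)*(d:ℚ) := by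
  rcases le_or_gt 9 d with h | h
  · have h1 := Nat.cast_descFactorial ℚ d 10
    rw [Nat.descFactorial_eq_factorial_mul_choose] at h1
    rw [show (10:ℕ) - 1 = 9 from rfl, Nat.cast_sub h] at h1
    push_cast at h1
    rw [show (Nat.factorial 10 : ℚ) = 3628800 by norm_num [Nat.factorial]] at h1
    rw [poch10] at h1
    rw [mul_comm, h1]; ring
  · interval_cases d <;> rw [Nat.choose_eq_zero_of_lt (by norm_num)] <;> norm_num

/-- C(d,10) = (1814400/1814400)·L_d(2) − (1109472/1209600)·L_d(3) + (724550/907200)·L_d(4)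
− (269324/725760)·L_d(5) + (63273/604800)·L_d(6) − (9450/518400)·L_d(7) + (870/453600)·L_d(8)
− (45/403200)·L_d(9) + (1/362880)·L_d(10). -/
theorem choose_ten_eq (d : ℕ) :
    (d.choose 10 : ℚ) =
      (1814400 / 1814400) * witt d 2 - (1109472 / 1209600) * witt d 3
        + (724550 / 907200) * witt d 4 - (269324 / 725760) * witt d 5
        + (63273 / 604800) * witt d 6 - (9450 / 518400) * witt d 7
        + (870 / 453600) * witt d 8 - (45 / 403200) * witt d 9
        + (1 / 362880) * witt d 10 := by
  have key2 : (d.choose 10 : ℚ) =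
      ((d:ℚ)-9)*((d:ℚ)-8)*((d:ℚ)-7)*((d:ℚ)-6)*((d:ℚ)-5)*((d:ℚ)-4)*((d:ℚ)-3)*((d:ℚ)-2)*((d:ℚ)-1)*(d:ℚ) / 3628800 := by
    rw [← key d]; ring
  rw [key2]
  rw [witt, witt, witt, witt, witt, witt, witt, witt, witt]
  rw [show Nat.divisors 2 = {1,2} from by decide,
      show Nat.divisors 3 = {1,3} from by decide,
      show Nat.divisors 4 = {1,2,4} from by decide,
      show Nat.divisors 5 = {1,5} from by decide,
      show Nat.divisors 6 = {1,2,3,6} from by decide,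
      show Nat.divisors 7 = {1,7} from by decide,
      show Nat.divisors 8 = {1,2,4,8} from by decide,
      show Nat.divisors 9 = {1,3,9} from by decide,
      show Nat.divisors 10 = {1,2,5,10} from by decide]
  norm_num [Finset.sum_insert, Finset.mem_insert, Finset.mem_singleton,
    mu1, mu2, mu3, mu4, mu5, mu6, mu7, mu8, mu9, mu10]
  ring
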